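/- Let N ≥ p + 4p/(p-1) with p > 1, let h ∈ C²(0,1] ∩ L¹(0,1] be nonnegative, Φ(r) = r^{2√((N-1)/(p-1))}(1 + ∫₀ʳ h), and u_r < 0 defined by Φ'(r) = (N-1) r^{N-3}|u_r(r)|^p. Then |u_r(r)| ≥ c_{N,p} r^{-(1/p)(N - 2√((N-1)/(p-1)) - 2)} for all r ∈ (0,1], where c_{N,p} = ( (2/(N-1))√((N-1)/(p-1)) )^{1/p}; consequently u_r ∉ L¹(0,1) and any primitive u with this radial derivative satisfies u(r) → +∞ as r → 0⁺. -/

import Mathlib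

open Real MeasureTheory Set Filter

/-- If `f` is monotone on `s`, `r ∈ s`, `f` has derivative `d` at `r`, and `s \ {r}`
accumulates at `r`, then `d ≥ 0`. -/
lemma aux_deriv_nonneg_of_monotoneOn {f : ℝ → ℝ} {s : Set ℝ} {r d : ℝ}
    (hm : MonotoneOn f s) (hr : r ∈ s) (hd : HasDerivAt f d r)
    (hacc : (nhdsWithin r (s \ {r})).NeBot) : 0 ≤ d := by
  have h1 : HasDerivWithinAt f d s r := hd.hasDerivWithinAt
  have h2 := hasDerivWithinAt_iff_tendsto_slope.1 h1
  refine ge_of_tendsto h2 ?_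
  filter_upwards [self_mem_nhdsWithin] with y hy
  rcases lt_or_gt_of_ne (show y ≠ r from hy.2) with hlt | hgt
  · have hle : f y ≤ f r := hm hy.1 hr hlt.le
    rw [slope_def_field]
    exact div_nonneg_of_nonpos (by linarith) (by linarith)
  · have hle : f r ≤ f y := hm hr hy.1 hgt.le
    rw [slope_def_field]
    exact div_nonneg (by linarith) (by linarith)

/-- With `Φ(r) = r^{2√((N-1)/(p-1))}(1 + ∫₀ʳ h)` and `|u_r| = w > 0` defined by
`Φ'(r) = (N-1) r^{N-3} w(r)^p`, for `N ≥ p + 4p/(p-1)` one has the lower bound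
`w(r) ≥ ((2/(N-1))√((N-1)/(p-1)))^{1/p} r^{-(1/p)(N - 2√((N-1)/(p-1)) - 2)}`;
consequently `w ∉ L¹(0,1)` and any primitive `u` with `u_r = -w` blows up at `0`. -/
theorem family_unbounded
    (N p : ℝ) (hp : 1 < p) (hN : N ≥ p + 4 * p / (p - 1))
    (h : ℝ → ℝ) (hh0 : ∀ r ∈ Ioc (0:ℝ) 1, 0 ≤ h r)
    (hhC2 : ContDiffOn ℝ 2 h (Ioc (0:ℝ) 1))
    (hhL1 : IntegrableOn h (Ioc (0:ℝ) 1))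
    (Φ Φ' : ℝ → ℝ)
    (hΦ : ∀ r ∈ Ioc (0:ℝ) 1,
      Φ r = r ^ (2 * Real.sqrt ((N - 1) / (p - 1))) * (1 + ∫ s in Ioo (0:ℝ) r, h s))
    (hΦ' : ∀ r ∈ Ioc (0:ℝ) 1, HasDerivAt Φ (Φ' r) r)
    (w : ℝ → ℝ) (hw : ∀ r ∈ Ioc (0:ℝ) 1, 0 < w r)
    (hweq : ∀ r ∈ Ioc (0:ℝ) 1, Φ' r = (N - 1) * r ^ (N - 3) * (w r) ^ p) :
    (∀ r ∈ Ioc (0:ℝ) 1,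
      ((2 / (N - 1)) * Real.sqrt ((N - 1) / (p - 1))) ^ (1 / p) *
        r ^ (-(1 / p) * (N - 2 * Real.sqrt ((N - 1) / (p - 1)) - 2)) ≤ w r) ∧
    ¬ IntegrableOn w (Ioo (0:ℝ) 1) ∧
    (∀ u : ℝ → ℝ, (∀ r ∈ Ioo (0:ℝ) 1, HasDerivAt u (-(w r)) r) →
      Tendsto u (nhdsWithin 0 (Ioi (0:ℝ))) atTop) := by
  have hp1 : (0:ℝ) < p - 1 := by linarith
  have hp0 : (0:ℝ) < p := by linarith
  -- N is large
  have h4p : (4:ℝ) < 4 * p / (p - 1) := by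
    rw [lt_div_iff₀ hp1]; nlinarith
  have hN5 : (5:ℝ) < N := by linarith
  have hN1 : (0:ℝ) < N - 1 := by linarith
  have hN1' : (N:ℝ) - 1 ≠ 0 := ne_of_gt hN1
  have hsq : 0 < Real.sqrt ((N - 1) / (p - 1)) :=
    Real.sqrt_pos.2 (div_pos hN1 hp1)
  set α : ℝ := 2 * Real.sqrt ((N - 1) / (p - 1)) with hαdef
  have hα0 : 0 < α := by positivity
  -- key polynomial inequality
  have hN' : 4 * p ≤ (N - p) * (p - 1) := by
    have h1 : 4 * p / (p - 1) ≤ N - p := by linarith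
    rwa [div_le_iff₀ hp1] at h1
  have hM : 0 < N - 2 - p := by nlinarith
  have hMa : 2 * (p - 1) + 4 ≤ (N - 2 - p) * (p - 1) := by nlinarith
  have hpoly : 4 * ((N - 1) / (p - 1)) ≤ (N - 2 - p) ^ 2 := by
    rw [show 4 * ((N - 1) / (p - 1)) = 4 * (N - 1) / (p - 1) by ring, div_le_iff₀ hp1]
    nlinarith [mul_le_mul_of_nonneg_left hMa hM.le]
  have hαle : α ≤ N - 2 - p := by
    have h2 : α = Real.sqrt (4 * ((N - 1) / (p - 1))) := by
      rw [show (4:ℝ) * ((N - 1) / (p - 1)) = 2 ^ 2 * ((N - 1) / (p - 1)) by ring,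
        Real.sqrt_mul (by norm_num : (0:ℝ) ≤ 2 ^ 2),
        Real.sqrt_sq (by norm_num : (0:ℝ) ≤ 2)]
    calc α = Real.sqrt (4 * ((N - 1) / (p - 1))) := h2
      _ ≤ Real.sqrt ((N - 2 - p) ^ 2) := Real.sqrt_le_sqrt hpoly
      _ = N - 2 - p := Real.sqrt_sq hM.le
  -- the running integral
  set H : ℝ → ℝ := fun r => ∫ s in Ioo (0:ℝ) r, h s with hHdef
  have hH0 : ∀ r ∈ Ioc (0:ℝ) 1, 0 ≤ H r := by
    intro r hr
    refine setIntegral_nonneg measurableSet_Ioo fun x hx => ?_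
    exact hh0 x ⟨hx.1, hx.2.le.trans hr.2⟩
  have hHmono : MonotoneOn H (Ioc (0:ℝ) 1) := by
    intro a ha b hb hab
    refine setIntegral_mono_set (hhL1.mono_set fun x hx => ⟨hx.1, hx.2.le.trans hb.2⟩) ?_ ?_
    · filter_upwards [ae_restrict_mem measurableSet_Ioo] with x hx
      exact hh0 x ⟨hx.1, hx.2.le.trans hb.2⟩
    · exact (Ioo_subset_Ioo_right hab).eventuallyLE
  -- ψ = Φ - r^α is monotone on (0,1]
  set ψ : ℝ → ℝ := fun r => Φ r - r ^ α with hψdef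
  have hψeq : ∀ r ∈ Ioc (0:ℝ) 1, ψ r = r ^ α * H r := by
    intro r hr
    simp only [hψdef]
    rw [hΦ r hr]; ring
  have hψmono : MonotoneOn ψ (Ioc (0:ℝ) 1) := by
    intro a ha b hb hab
    rw [hψeq a ha, hψeq b hb]
    have h1 : a ^ α ≤ b ^ α := Real.rpow_le_rpow ha.1.le hab hα0.le
    have h2 : (0:ℝ) ≤ a ^ α := (Real.rpow_pos_of_pos ha.1 α).le
    have h3 : (0:ℝ) ≤ b ^ α := (Real.rpow_pos_of_pos hb.1 α).le
    exact mul_le_mul h1 (hHmono ha hb hab) (hH0 a ha) h3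
  -- lower bound on Φ'
  have hΦ'ge : ∀ r ∈ Ioc (0:ℝ) 1, α * r ^ (α - 1) ≤ Φ' r := by
    intro r hr
    have hd : HasDerivAt ψ (Φ' r - α * r ^ (α - 1)) r :=
      (hΦ' r hr).sub (Real.hasDerivAt_rpow_const (Or.inl (ne_of_gt hr.1)))
    have hacc : (nhdsWithin r (Ioc (0:ℝ) 1 \ {r})).NeBot := by
      have hsub : Ioo (0:ℝ) r ⊆ Ioc (0:ℝ) 1 \ {r} := fun x hx =>
        ⟨⟨hx.1, hx.2.le.trans hr.2⟩, ne_of_lt hx.2⟩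
      have h1 : (nhdsWithin r (Ioo (0:ℝ) r)).NeBot := by
        rw [← mem_closure_iff_nhdsWithin_neBot, closure_Ioo (ne_of_lt hr.1)]
        exact ⟨hr.1.le, le_refl r⟩
      exact h1.mono (nhdsWithin_mono r hsub)
    have := aux_deriv_nonneg_of_monotoneOn hψmono hr hd hacc
    linarith
  -- the constants
  set c : ℝ := α / (N - 1) with hcdef
  have hc0 : 0 < c := div_pos hα0 hN1
  set β : ℝ := α + 2 - N with hβdef
  set C : ℝ := c ^ (1 / p) with hCdef
  have hC0 : 0 < C := Real.rpow_pos_of_pos hc0 _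
  set e : ℝ := β * (1 / p) with hedef
  have heneg : e ≤ -1 := by
    rw [hedef, hβdef, mul_one_div, div_le_iff₀ hp0]
    linarith
  -- the pointwise lower bound
  have key : ∀ r ∈ Ioc (0:ℝ) 1, C * r ^ e ≤ w r := by
    intro r hr
    have hr0 : 0 < r := hr.1
    have h1 : α * r ^ (α - 1) ≤ (N - 1) * r ^ (N - 3) * w r ^ p := by
      have := hΦ'ge r hr; rwa [hweq r hr] at this
    have hpos : 0 < (N - 1) * r ^ (N - 3) := mul_pos hN1 (Real.rpow_pos_of_pos hr0 _)
    have heq' : (N - 1) * r ^ (N - 3) * (c * r ^ β) = α * r ^ (α - 1) := by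
      rw [show (N - 1) * r ^ (N - 3) * (c * r ^ β) = c * (N - 1) * (r ^ (N - 3) * r ^ β) by ring,
        ← Real.rpow_add hr0, hcdef, div_mul_cancel₀ _ hN1',
        show N - 3 + β = α - 1 by rw [hβdef]; ring]
    have h2 : c * r ^ β ≤ w r ^ p := by
      have h3 : (N - 1) * r ^ (N - 3) * (c * r ^ β) ≤ (N - 1) * r ^ (N - 3) * (w r ^ p) := by
        rw [heq']; linarith [h1]
      exact le_of_mul_le_mul_left h3 hpos
    have h4 : (c * r ^ β) ^ (1 / p) ≤ (w r ^ p) ^ (1 / p) :=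
      Real.rpow_le_rpow (by positivity) h2 (by positivity)
    have h5 : (w r ^ p) ^ (1 / p) = w r := by
      rw [← Real.rpow_mul (hw r hr).le, mul_one_div_cancel hp0.ne', Real.rpow_one]
    have h6 : (c * r ^ β) ^ (1 / p) = C * r ^ e := by
      rw [Real.mul_rpow hc0.le (Real.rpow_pos_of_pos hr0 β).le,
        ← Real.rpow_mul hr0.le, hCdef, hedef]
    rw [← h6, ← h5]
    exact h4
  -- assemble the three parts
  refine ⟨?_, ?_, ?_⟩
  · intro r hr
    have hbase : (2 / (N - 1)) * Real.sqrt ((N - 1) / (p - 1)) = c := by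
      rw [hcdef, hαdef]; ring
    have hexp : -(1 / p) * (N - 2 * Real.sqrt ((N - 1) / (p - 1)) - 2) = e := by
      rw [hedef, hβdef, hαdef]; ring
    rw [hbase, hexp]
    exact key r hr
  · intro hInt
    have hcont : ContinuousOn (fun r : ℝ => C * r ^ e) (Ioo (0:ℝ) 1) := fun r hr =>
      (continuousAt_const.mul
        (Real.continuousAt_rpow_const r e (Or.inl (ne_of_gt hr.1)))).continuousWithinAt
    have hmeas : AEStronglyMeasurable (fun r : ℝ => C * r ^ e)
        (volume.restrict (Ioo (0:ℝ) 1)) :=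
      hcont.aestronglyMeasurable measurableSet_Ioo
    have hInt2 : IntegrableOn (fun r : ℝ => C * r ^ e) (Ioo (0:ℝ) 1) := by
      refine hInt.mono' hmeas ?_
      filter_upwards [ae_restrict_mem measurableSet_Ioo] with x hx
      have hx0 : 0 < x := hx.1
      rw [Real.norm_eq_abs, abs_of_nonneg (by positivity)]
      exact key x ⟨hx.1, hx.2.le⟩
    have hInt3 : IntegrableOn (fun r : ℝ => r ^ e) (Ioo (0:ℝ) 1) := by
      have := hInt2.const_mul C⁻¹
      simpa [IntegrableOn, inv_mul_cancel_left₀ hC0.ne'] using this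
    rw [intervalIntegral.integrableOn_Ioo_rpow_iff one_pos] at hInt3
    linarith
  · intro u hu
    have hw' : ∀ r ∈ Ioo (0:ℝ) 1, C * r⁻¹ ≤ w r := by
      intro r hr
      have hr0 : 0 < r := hr.1
      have h1 : r ^ (-1:ℝ) ≤ r ^ e :=
        Real.rpow_le_rpow_of_exponent_ge hr0 hr.2.le heneg
      rw [Real.rpow_neg_one] at h1
      calc C * r⁻¹ ≤ C * r ^ e := by nlinarith
        _ ≤ w r := key r ⟨hr.1, hr.2.le⟩
    set φ : ℝ → ℝ := fun r => u r + C * Real.log r with hφdef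
    have hφd : ∀ r ∈ Ioo (0:ℝ) 1, HasDerivAt φ (-(w r) + C * r⁻¹) r := by
      intro r hr
      exact (hu r hr).add ((Real.hasDerivAt_log hr.1.ne').const_mul C)
    have hanti : AntitoneOn φ (Ioo (0:ℝ) 1) := by
      refine antitoneOn_of_deriv_nonpos (convex_Ioo _ _)
        (fun r hr => (hφd r hr).continuousAt.continuousWithinAt) ?_ ?_
      · rw [interior_Ioo]
        exact fun r hr => (hφd r hr).differentiableAt.differentiableWithinAt
      · rw [interior_Ioo]
        intro r hr
        rw [(hφd r hr).deriv]
        have := hw' r hr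
        linarith
    have hhalf : (1/2 : ℝ) ∈ Ioo (0:ℝ) 1 := by norm_num
    have hbd : ∀ r ∈ Ioo (0:ℝ) (1/2),
        u (1/2) + C * Real.log (1/2) - C * Real.log r ≤ u r := by
      intro r hr
      have hr1 : r ∈ Ioo (0:ℝ) 1 := ⟨hr.1, hr.2.trans (by norm_num)⟩
      have := hanti hr1 hhalf hr.2.le
      simp only [hφdef] at this
      linarith
    have hlog : Tendsto (fun r : ℝ => C * Real.log r) (nhdsWithin 0 (Ioi (0:ℝ))) atBot :=
      Real.tendsto_log_nhdsGT_zero.const_mul_atBot hC0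
    have hneg : Tendsto (fun r : ℝ => -(C * Real.log r)) (nhdsWithin 0 (Ioi (0:ℝ))) atTop :=
      tendsto_neg_atBot_atTop.comp hlog
    have htend : Tendsto (fun r : ℝ => u (1/2) + C * Real.log (1/2) - C * Real.log r)
        (nhdsWithin 0 (Ioi (0:ℝ))) atTop := by
      simpa [sub_eq_add_neg] using
        tendsto_atTop_add_const_left _ (u (1/2) + C * Real.log (1/2)) hneg
    refine tendsto_atTop_mono' _ ?_ htend
    filter_upwards [Ioo_mem_nhdsGT_of_mem
      (show (0:ℝ) ∈ Ico (0:ℝ) (1/2) by norm_num)] with r hr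
    exact hbd r hr
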